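/- The stripped partition (PLI) lemma: the functional dependency X → Y holds on a relation instance r if and only if the partition of r induced by X equals (refines to no finer than) the partition induced by X ∪ Y; equivalently, the number of equivalence classes of the 'agree on X' relation equals the number of equivalence classes of the 'agree on X ∪ Y' relation. -/
import Mathlib

variable {α V : Type*}

/-- Two tuples agree on an attribute set `X`. -/
def Agrees (X : Set α) (t₁ t₂ : α → V) : Prop := ∀ a ∈ X, t₁ a = t₂ a

/-- The functional dependency `X → Y` holds on the relation instance `r`. -/
def FDHolds (r : Set (α → V)) (X Y : Set α) : Prop :=
  ∀ t₁ ∈ r, ∀ t₂ ∈ r, Agrees X t₁ t₂ → Agrees Y t₁ t₂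

/-- PLI lemma: on a finite relation instance `r`, the FD `X → Y` holds iff the number of
equivalence classes of the "agree on `X`" relation (i.e. the number of distinct restrictions
of tuples of `r` to `X`) equals the number of equivalence classes of the
"agree on `X ∪ Y`" relation. -/
theorem fd_holds_iff_partition_card_eq (r : Set (α → V)) (hr : r.Finite) (X Y : Set α) :
    FDHolds r X Y ↔ (X.restrict '' r).ncard = ((X ∪ Y).restrict '' r).ncard := by
  classical
  set f : (↑(X ∪ Y) → V) → (↑X → V) :=
    fun g (x : ↑X) => g ⟨x.1, Or.inl x.2⟩ with hf
  have himg : X.restrict '' r = f '' ((X ∪ Y).restrict '' r) := by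
    rw [Set.image_image]
    rfl
  constructor
  · intro hFD
    rw [himg]
    rw [Set.ncard_image_of_injOn]
    rintro _ ⟨t₁, ht₁, rfl⟩ _ ⟨t₂, ht₂, rfl⟩ heq
    have hagX : Agrees X t₁ t₂ := fun a ha => congrFun heq ⟨a, ha⟩
    have hagY := hFD t₁ ht₁ t₂ ht₂ hagX
    funext a
    rcases a with ⟨a, ha | ha⟩
    · exact hagX a ha
    · exact hagY a ha
  · intro hcard t₁ ht₁ t₂ ht₂ hagX a ha
    rw [himg] at hcard
    have hinj : Set.InjOn f ((X ∪ Y).restrict '' r) :=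
      Set.injOn_of_ncard_image_eq hcard (hr.image _)
    have h1 : f ((X ∪ Y).restrict t₁) = f ((X ∪ Y).restrict t₂) := by
      funext x
      exact hagX x.1 x.2
    have h2 := hinj ⟨t₁, ht₁, rfl⟩ ⟨t₂, ht₂, rfl⟩ h1
    exact congrFun h2 ⟨a, Or.inr ha⟩
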